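/- There exists a distribution over (p_X, Y_X) with p_X ∈ {0.45, 0.55} (each with probability 1/2), E[Y_X | p_X = 0.45] = 0.05 and E[Y_X | p_X = 0.55] = 0.95, such that the binned calibration error with bins [0,1/3), [1/3,2/3), [2/3,1] is exactly 0, while the worst-interval calibration error satisfies UC ≥ 0.2 (witnessed by the interval [0.45, 0.46]). -/

import Mathlib

open MeasureTheory Set Measure
open scoped ENNReal

lemma integrable_dirac'' {α : Type*} [MeasurableSpace α] [MeasurableSingletonClass α]
    (f : α → ℝ) (a : α) : Integrable f (dirac a) :=
  (integrable_const (f a)).congr (ae_eq_dirac f).symm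

lemma integral_four (f : ℝ × ℝ → ℝ) (a b c d : ℝ × ℝ) (p q r s : ℝ≥0∞)
    (hp : p ≠ ⊤) (hq : q ≠ ⊤) (hr : r ≠ ⊤) (hs : s ≠ ⊤) :
    ∫ x, f x ∂(p • dirac a + q • dirac b + r • dirac c + s • dirac d) =
      p.toReal * f a + q.toReal * f b + r.toReal * f c + s.toReal * f d := by
  have h : ∀ (u : ℝ≥0∞) (e : ℝ × ℝ), u ≠ ⊤ → Integrable f (u • dirac e) :=
    fun u e hu => (integrable_dirac'' f e).smul_measure hu
  rw [integral_add_measure (((h p a hp).add_measure (h q b hq)).add_measure (h r c hr)) (h s d hs),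
    integral_add_measure ((h p a hp).add_measure (h q b hq)) (h r c hr),
    integral_add_measure (h p a hp) (h q b hq)]
  simp [integral_smul_measure, smul_eq_mul]

/-- there is a distribution over `(p_X, Y_X)` with `p_X ∈ {0.45, 0.55}` (each with
probability 1/2), `E[Y_X | p_X = 0.45] = 0.05`, `E[Y_X | p_X = 0.55] = 0.95`, whose binned
calibration error with bins `[0,1/3), [1/3,2/3), [2/3,1]` is exactly `0`, while the worst-interval
calibration error is at least `0.2`, witnessed by the interval `[0.45, 0.46]`. -/
theorem stmt_9 : ∃ μ : Measure (ℝ × ℝ), IsProbabilityMeasure μ ∧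
    μ {x | x.1 = 0.45} = 1 / 2 ∧ μ {x | x.1 = 0.55} = 1 / 2 ∧
    (∀ᵐ x ∂μ, x.2 = 0 ∨ x.2 = 1) ∧
    (∫ x in {x : ℝ × ℝ | x.1 = 0.45}, x.2 ∂μ) = 0.05 * (1 / 2) ∧
    (∫ x in {x : ℝ × ℝ | x.1 = 0.55}, x.2 ∂μ) = 0.95 * (1 / 2) ∧
    (|∫ x, (x.1 - x.2) * (Ico (0 : ℝ) (1 / 3)).indicator (fun _ => (1 : ℝ)) x.1 ∂μ| +
      |∫ x, (x.1 - x.2) * (Ico (1 / 3 : ℝ) (2 / 3)).indicator (fun _ => (1 : ℝ)) x.1 ∂μ| +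
      |∫ x, (x.1 - x.2) * (Icc (2 / 3 : ℝ) 1).indicator (fun _ => (1 : ℝ)) x.1 ∂μ|) = 0 ∧
    0.2 ≤ |∫ x, (x.2 - x.1) * (Icc (0.45 : ℝ) 0.46).indicator (fun _ => (1 : ℝ)) x.1 ∂μ| := by
  set A : ℝ × ℝ := (0.45, 0)
  set B : ℝ × ℝ := (0.45, 1)
  set C : ℝ × ℝ := (0.55, 0)
  set D : ℝ × ℝ := (0.55, 1)
  have h19 : (19/40 : ℝ≥0∞) ≠ ⊤ := (ENNReal.div_lt_top (by norm_num) (by norm_num)).ne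
  have h1 : (1/40 : ℝ≥0∞) ≠ ⊤ := (ENNReal.div_lt_top (by norm_num) (by norm_num)).ne
  refine ⟨(19/40 : ℝ≥0∞) • dirac A + (1/40 : ℝ≥0∞) • dirac B +
    (1/40 : ℝ≥0∞) • dirac C + (19/40 : ℝ≥0∞) • dirac D, ?_, ?_, ?_, ?_, ?_, ?_, ?_, ?_⟩
  · constructor
    simp only [Measure.add_apply, Measure.smul_apply, smul_eq_mul, measure_univ, mul_one]
    rw [ENNReal.div_add_div_same, ENNReal.div_add_div_same, ENNReal.div_add_div_same]
    norm_num
    exact ENNReal.div_self (by norm_num) (by norm_num)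
  · have hS : MeasurableSet {x : ℝ × ℝ | x.1 = 0.45} :=
      measurable_fst (measurableSet_singleton (0.45 : ℝ))
    simp only [Measure.add_apply, Measure.smul_apply, smul_eq_mul, dirac_apply' _ hS,
      Set.indicator_apply, Set.mem_setOf_eq]
    norm_num [A, B, C, D]
    rw [← one_div, ← one_div, ENNReal.div_add_div_same, ENNReal.div_eq_div_iff] <;> norm_num
  · have hS : MeasurableSet {x : ℝ × ℝ | x.1 = 0.55} :=
      measurable_fst (measurableSet_singleton (0.55 : ℝ))
    simp only [Measure.add_apply, Measure.smul_apply, smul_eq_mul, dirac_apply' _ hS,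
      Set.indicator_apply, Set.mem_setOf_eq]
    norm_num [A, B, C, D]
    rw [← one_div, ← one_div, ENNReal.div_add_div_same, ENNReal.div_eq_div_iff] <;> norm_num
  · rw [ae_iff]
    have hS : MeasurableSet {x : ℝ × ℝ | ¬(x.2 = 0 ∨ x.2 = 1)} := by
      have he : {x : ℝ × ℝ | ¬(x.2 = 0 ∨ x.2 = 1)} =
          ({x : ℝ × ℝ | x.2 = 0} ∪ {x : ℝ × ℝ | x.2 = 1})ᶜ := by ext x; simp [not_or]
      rw [he]
      exact ((measurable_snd (measurableSet_singleton (0:ℝ))).union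
        (measurable_snd (measurableSet_singleton (1:ℝ)))).compl
    simp only [Measure.add_apply, Measure.smul_apply, smul_eq_mul, dirac_apply' _ hS,
      Set.indicator_apply, Set.mem_setOf_eq]
    norm_num [A, B, C, D]
  · have hS : MeasurableSet {x : ℝ × ℝ | x.1 = 0.45} :=
      measurable_fst (measurableSet_singleton (0.45 : ℝ))
    rw [← integral_indicator hS, integral_four _ _ _ _ _ _ _ _ _ h19 h1
      h1 h19]
    norm_num [A, B, C, D, Set.indicator_apply, ENNReal.toReal_div]
  · have hS : MeasurableSet {x : ℝ × ℝ | x.1 = 0.55} :=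
      measurable_fst (measurableSet_singleton (0.55 : ℝ))
    rw [← integral_indicator hS, integral_four _ _ _ _ _ _ _ _ _ h19 h1
      h1 h19]
    norm_num [A, B, C, D, Set.indicator_apply, ENNReal.toReal_div]
  · rw [integral_four _ _ _ _ _ _ _ _ _ h19 h1 h1 h19,
      integral_four _ _ _ _ _ _ _ _ _ h19 h1 h1 h19,
      integral_four _ _ _ _ _ _ _ _ _ h19 h1 h1 h19]
    norm_num [A, B, C, D, Set.indicator_apply, Set.mem_Ico, Set.mem_Icc, ENNReal.toReal_div]
  · rw [integral_four _ _ _ _ _ _ _ _ _ h19 h1 h1 h19]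
    norm_num [A, B, C, D, Set.indicator_apply, Set.mem_Icc, ENNReal.toReal_div]
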